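/- Let f: [0,1] → [0,∞) be absolutely continuous, nondecreasing, with f(0)=0, and suppose there is a constant C > 0 such that f(t) ≤ C (t f'(t))^{1 + 1/(2n)} for almost every t ∈ (0,1), for some integer n ≥ 1. If f(1) ≤ M, then there exists δ > 0 depending only on n, C, M such that f(t) = 0 for all t ≤ δ. -/

import Mathlib

open MeasureTheory Set Filter intervalIntegral
open scoped Topology

/-- ODE lemma: if `f : [0,1] → [0,∞)` is absolutely continuous (expressed
via the fundamental theorem of calculus with an integrable derivative `f'`), nondecreasing,
`f 0 = 0`, satisfies `f t ≤ C (t f'(t))^{1 + 1/(2n)}` a.e. on `(0,1)`, and `f 1 ≤ M`, then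
`f` vanishes on `[0, δ]` for some `δ > 0` depending only on `n`, `C`, `M`. -/
theorem stmt_3 (n : ℕ) (hn : 1 ≤ n) (C M : ℝ) (hC : 0 < C) :
    ∃ δ : ℝ, 0 < δ ∧
    ∀ f f' : ℝ → ℝ,
      (∀ t ∈ Icc (0:ℝ) 1, 0 ≤ f t) →
      MonotoneOn f (Icc (0:ℝ) 1) →
      f 0 = 0 →
      IntegrableOn f' (Icc (0:ℝ) 1) →
      (∀ x ∈ Icc (0:ℝ) 1, f x = ∫ t in (0:ℝ)..x, f' t) →
      (∀ᵐ t, t ∈ Ioo (0:ℝ) 1 → f t ≤ C * (t * f' t) ^ ((1:ℝ) + 1 / (2 * (n:ℝ)))) →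
      f 1 ≤ M →
      ∀ t ∈ Icc (0:ℝ) δ, f t = 0 := by
  classical
  have hn1 : (1:ℝ) ≤ (n:ℝ) := by exact_mod_cast hn
  have hn0 : (0:ℝ) < (n:ℝ) := by linarith
  set α : ℝ := (1:ℝ) + 1 / (2 * (n:ℝ)) with hαdef
  have hα1 : 1 < α := by
    have h : 0 < 1 / (2 * (n:ℝ)) := by positivity
    rw [hαdef]; linarith
  have hα0 : (0:ℝ) < α := by linarith
  set β : ℝ := 1 - α⁻¹ with hβdef
  have hαinv1 : α⁻¹ < 1 := inv_lt_one_of_one_lt₀ hα1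
  have hαinv0 : 0 < α⁻¹ := by positivity
  have hβ0 : 0 < β := by rw [hβdef]; linarith
  set r : ℝ := (2:ℝ) ^ β with hrdef
  have hr1 : 1 < r := by
    have := Real.rpow_lt_rpow_of_exponent_lt (show (1:ℝ) < 2 by norm_num) hβ0
    rwa [Real.rpow_zero] at this
  have hr0 : 0 < r := by linarith
  set M' : ℝ := max M 1 with hM'def
  have hM'1 : (1:ℝ) ≤ M' := le_max_right _ _
  have hM'0 : (0:ℝ) < M' := by linarith
  set T : ℝ := C ^ α⁻¹ * (2 * M') ^ β / (r - 1) with hTdef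
  have hc'0 : 0 < C ^ α⁻¹ := Real.rpow_pos_of_pos hC _
  have h2M'β : 0 < (2 * M') ^ β := Real.rpow_pos_of_pos (by linarith) _
  have hT0 : 0 < T := by
    rw [hTdef]; exact div_pos (mul_pos hc'0 h2M'β) (by linarith)
  refine ⟨Real.exp (-T), Real.exp_pos _, ?_⟩
  set δ : ℝ := Real.exp (-T) with hδdef
  have hδ0 : 0 < δ := Real.exp_pos _
  have hδ1 : δ ≤ 1 := Real.exp_le_one_iff.2 (by linarith)
  intro f f' hpos hmono hf0 hint hFTC hae hM1
  -- the key ODE step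
  have key : ∀ a b : ℝ, 0 < a → a ≤ b → b ≤ 1 → 0 < f a →
      f a + (f a / C) ^ α⁻¹ * Real.log (b / a) ≤ f b := by
    intro a b ha hab hb1 hfa
    have ha1 : a ≤ 1 := le_trans hab hb1
    have haI : a ∈ Icc (0:ℝ) 1 := ⟨ha.le, ha1⟩
    have hbI : b ∈ Icc (0:ℝ) 1 := ⟨by linarith, hb1⟩
    set K0 : ℝ := (f a / C) ^ α⁻¹ with hK0def
    have hK0pos : 0 < K0 := Real.rpow_pos_of_pos (div_pos hfa hC) _
    -- interval integrability of f'
    have hii : ∀ u v : ℝ, 0 ≤ u → u ≤ v → v ≤ 1 → IntervalIntegrable f' volume u v := by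
      intro u v hu huv hv
      apply MeasureTheory.IntegrableOn.intervalIntegrable
      apply hint.mono_set
      rw [uIcc_of_le huv]
      exact Icc_subset_Icc hu hv
    -- f b - f a = ∫_a^b f'
    have hdiff : f b - f a = ∫ t in a..b, f' t := by
      rw [hFTC b hbI, hFTC a haI]
      exact integral_interval_sub_left (hii 0 b (le_refl 0) (by linarith) hb1)
        (hii 0 a (le_refl 0) ha.le ha1)
    -- a.e. lower bound for f' on Ioc a b
    have hne1 : ∀ᵐ t : ℝ, t ≠ 1 := by
      rw [ae_iff]
      have : {t : ℝ | ¬ t ≠ 1} = {1} := by ext t; simp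
      rw [this]
      exact measure_singleton 1
    have hbd : ∀ᵐ t, t ∈ Ioc a b → K0 * t⁻¹ ≤ f' t := by
      filter_upwards [hae, hne1] with t h1 h2 ht
      have ht0 : 0 < t := lt_trans ha ht.1
      have ht1 : t < 1 := lt_of_le_of_ne (le_trans ht.2 hb1) h2
      have hft := h1 ⟨ht0, ht1⟩
      have hmle : f a ≤ f t := hmono haI ⟨ht0.le, ht1.le⟩ ht.1.le
      set x : ℝ := t * f' t with hxdef
      have hx : f a ≤ C * x ^ α := le_trans hmle hft
      have hxpos : 0 < x := by
        by_contra hxn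
        push_neg at hxn
        rcases lt_or_eq_of_le hxn with hlt | heq
        · have hcos : Real.cos (α * Real.pi) ≤ 0 := by
            have hrw : α * Real.pi = Real.pi / (2 * (n:ℝ)) + Real.pi := by
              rw [hαdef]; ring
            rw [hrw, Real.cos_add_pi]
            have hle : Real.pi / (2 * (n:ℝ)) ≤ Real.pi / 2 := by
              gcongr
              linarith
            have hge : 0 ≤ Real.pi / (2 * (n:ℝ)) := by positivity
            have := Real.cos_nonneg_of_mem_Icc
              (show Real.pi / (2 * (n:ℝ)) ∈ Icc (-(Real.pi/2)) (Real.pi/2) from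
                ⟨by linarith, hle⟩)
            linarith
          have hxα : x ^ α ≤ 0 := by
            rw [Real.rpow_def_of_neg hlt]
            exact mul_nonpos_of_nonneg_of_nonpos (Real.exp_pos _).le hcos
          have hCx : C * x ^ α ≤ 0 := mul_nonpos_of_nonneg_of_nonpos hC.le hxα
          linarith
        · rw [heq, Real.zero_rpow (ne_of_gt hα0), mul_zero] at hx
          linarith
      have h1' : f a / C ≤ x ^ α := (div_le_iff₀ hC).2 (by linarith [hx, mul_comm C (x ^ α)])
      have h2' : K0 ≤ x := by
        have h3 := Real.rpow_le_rpow (div_nonneg hfa.le hC.le) h1' hαinv0.le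
        rwa [← Real.rpow_mul hxpos.le, mul_inv_cancel₀ (ne_of_gt hα0), Real.rpow_one] at h3
      rw [show K0 * t⁻¹ = K0 / t by ring, div_le_iff₀ ht0]
      linarith [mul_comm t (f' t)]
    -- compare integrals
    have hg_int : IntegrableOn (fun t : ℝ => K0 * t⁻¹) (Ioc a b) := by
      apply MeasureTheory.IntegrableOn.mono_set _ Ioc_subset_Icc_self
      apply ContinuousOn.integrableOn_Icc
      apply ContinuousOn.mul continuousOn_const
      apply ContinuousOn.inv₀ continuousOn_id
      intro t ht
      exact ne_of_gt (lt_of_lt_of_le ha ht.1)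
    have hf'_int : IntegrableOn f' (Ioc a b) := by
      apply hint.mono_set
      exact (Ioc_subset_Icc_self.trans (Icc_subset_Icc ha.le hb1))
    have hcomp : ∫ t in Ioc a b, K0 * t⁻¹ ≤ ∫ t in Ioc a b, f' t :=
      setIntegral_mono_ae_restrict hg_int hf'_int
        ((ae_restrict_iff' measurableSet_Ioc).2 hbd)
    have hlogint : ∫ t in a..b, K0 * t⁻¹ = K0 * Real.log (b / a) := by
      rw [intervalIntegral.integral_const_mul, integral_inv]
      rw [uIcc_of_le hab]
      intro h0
      exact absurd h0.1 (not_le.2 ha)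
    have hieq1 : ∫ t in a..b, K0 * t⁻¹ = ∫ t in Ioc a b, K0 * t⁻¹ :=
      intervalIntegral.integral_of_le hab
    have hieq2 : ∫ t in a..b, f' t = ∫ t in Ioc a b, f' t :=
      intervalIntegral.integral_of_le hab
    have hfinal : K0 * Real.log (b / a) ≤ f b - f a := by
      calc K0 * Real.log (b / a) = ∫ t in a..b, K0 * t⁻¹ := hlogint.symm
        _ = ∫ t in Ioc a b, K0 * t⁻¹ := hieq1
        _ ≤ ∫ t in Ioc a b, f' t := hcomp
        _ = ∫ t in a..b, f' t := hieq2.symm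
        _ = f b - f a := hdiff.symm
    linarith
  -- reduce to showing f δ = 0
  have hδI : δ ∈ Icc (0:ℝ) 1 := ⟨hδ0.le, hδ1⟩
  suffices hfδ : f δ = 0 by
    intro t ht
    have htI : t ∈ Icc (0:ℝ) 1 := ⟨ht.1, le_trans ht.2 hδ1⟩
    have h1 := hmono htI hδI ht.2
    have h2 := hpos t htI
    linarith [hfδ ▸ h1]
  by_contra hne
  have hε : 0 < f δ := lt_of_le_of_ne (hpos δ hδI) (Ne.symm hne)
  set ε : ℝ := f δ with hεdef
  have hεM : ε ≤ M := le_trans (hmono hδI ⟨zero_le_one, le_rfl⟩ hδ1) hM1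
  have hM0 : 0 < M := lt_of_lt_of_le hε hεM
  -- find K with M < ε 2^K ≤ 2M
  have hPex : ∃ k : ℕ, M < ε * 2 ^ k := by
    obtain ⟨N, hN⟩ := pow_unbounded_of_one_lt (M / ε) (show (1:ℝ) < 2 by norm_num)
    refine ⟨N, ?_⟩
    rw [div_lt_iff₀ hε] at hN
    linarith [hN, mul_comm ((2:ℝ) ^ N) ε]
  set K : ℕ := Nat.find hPex with hKdef
  have hK : M < ε * 2 ^ K := Nat.find_spec hPex
  have hK0 : K ≠ 0 := by
    intro h
    have h2 := hK
    rw [h, pow_zero, mul_one] at h2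
    linarith
  have hK2M : ε * 2 ^ K ≤ 2 * M := by
    obtain ⟨K', hK'⟩ := Nat.exists_eq_succ_of_ne_zero hK0
    have hmin := Nat.find_min hPex (show K' < K by omega)
    push_neg at hmin
    rw [hK', pow_succ]
    linarith [hmin]
  -- the sequence of points
  set S : ℕ → ℝ := fun k => ∑ j ∈ Finset.range k, r ^ j with hSdef
  set u : ℕ → ℝ := fun k => δ * Real.exp (C ^ α⁻¹ * ε ^ β * S k) with hudef
  have hupos : ∀ k, 0 < u k := by
    intro k
    simp only [hudef]
    exact mul_pos hδ0 (Real.exp_pos _)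
  have hεβ0 : 0 < ε ^ β := Real.rpow_pos_of_pos hε _
  have h2pow : ∀ k : ℕ, r ^ k = ((2:ℝ) ^ k) ^ β := by
    intro k
    rw [hrdef, ← Real.rpow_natCast ((2:ℝ) ^ β) k, ← Real.rpow_natCast (2:ℝ) k,
      ← Real.rpow_mul (by norm_num : (0:ℝ) ≤ 2), ← Real.rpow_mul (by norm_num : (0:ℝ) ≤ 2),
      mul_comm]
  have hr_pow : ∀ k : ℕ, ε ^ β * r ^ k = (ε * 2 ^ k) ^ β := by
    intro k
    rw [h2pow k, ← Real.mul_rpow hε.le (by positivity)]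
  -- u k ≤ 1 for k ≤ K
  have hule : ∀ k, k ≤ K → u k ≤ 1 := by
    intro k hk
    have hS0 : ∀ j : ℕ, (0:ℝ) ≤ r ^ j := fun j => (pow_pos hr0 j).le
    have hSle : S k ≤ S K := by
      simp only [hSdef]
      exact Finset.sum_le_sum_of_subset_of_nonneg (Finset.range_subset_range.2 hk)
        (fun i _ _ => hS0 i)
    have hSK : S K ≤ r ^ K / (r - 1) := by
      simp only [hSdef]
      rw [geom_sum_eq (ne_of_gt hr1)]
      gcongr
      · linarith
    have hεβrK : ε ^ β * r ^ K ≤ (2 * M') ^ β := by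
      rw [hr_pow K]
      apply Real.rpow_le_rpow (by positivity) ?_ hβ0.le
      have hMM' : M ≤ M' := le_max_left _ _
      linarith
    have hexp : C ^ α⁻¹ * ε ^ β * S k ≤ T := by
      have hS0 : 0 ≤ S k := by
        simp only [hSdef]
        exact Finset.sum_nonneg (fun i _ => (pow_pos hr0 i).le)
      have step1 : C ^ α⁻¹ * ε ^ β * S k ≤ C ^ α⁻¹ * ε ^ β * (r ^ K / (r - 1)) := by
        apply mul_le_mul_of_nonneg_left (le_trans hSle hSK)
        positivity
      have step2 : C ^ α⁻¹ * ε ^ β * (r ^ K / (r - 1)) = C ^ α⁻¹ * (ε ^ β * r ^ K) / (r - 1) := by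
        ring
      have step3 : C ^ α⁻¹ * (ε ^ β * r ^ K) / (r - 1) ≤ C ^ α⁻¹ * (2 * M') ^ β / (r - 1) := by
        apply (div_le_div_iff_of_pos_right (show (0:ℝ) < r - 1 by linarith)).2
        exact mul_le_mul_of_nonneg_left hεβrK hc'0.le
      rw [hTdef]
      linarith [step1, step2 ▸ step1, step3]
    calc u k = Real.exp (-T) * Real.exp (C ^ α⁻¹ * ε ^ β * S k) := by
          simp only [hudef, hδdef]
      _ = Real.exp (C ^ α⁻¹ * ε ^ β * S k - T) := by rw [← Real.exp_add]; ring_nf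
      _ ≤ Real.exp 0 := Real.exp_le_exp.2 (by linarith)
      _ = 1 := Real.exp_zero
  have hu0 : u 0 = δ := by
    simp [hudef, hSdef]
  -- main induction
  have ind : ∀ k, k ≤ K → ε * 2 ^ k ≤ f (u k) := by
    intro k
    induction k with
    | zero =>
      intro _
      rw [hu0]
      simp
      exact le_of_eq hεdef
    | succ k ih =>
      intro hk1
      have hk : k ≤ K := Nat.le_of_succ_le hk1
      have ihk := ih hk
      have hbk : (0:ℝ) < ε * 2 ^ k := by positivity
      have hfk : 0 < f (u k) := lt_of_lt_of_le hbk ihk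
      have hq0 : 0 < C ^ α⁻¹ * ε ^ β * r ^ k :=
        mul_pos (mul_pos hc'0 hεβ0) (pow_pos hr0 k)
      have hstep : u (k+1) = u k * Real.exp (C ^ α⁻¹ * ε ^ β * r ^ k) := by
        simp only [hudef, hSdef, Finset.sum_range_succ]
        rw [show C ^ α⁻¹ * ε ^ β * (∑ j ∈ Finset.range k, r ^ j + r ^ k)
            = C ^ α⁻¹ * ε ^ β * (∑ j ∈ Finset.range k, r ^ j) + C ^ α⁻¹ * ε ^ β * r ^ k
          from by ring, Real.exp_add, ← mul_assoc]
      have hulek : u k ≤ u (k+1) := by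
        rw [hstep]
        exact le_mul_of_one_le_right (hupos k).le (Real.one_le_exp hq0.le)
      have hklog : Real.log (u (k+1) / u k) = C ^ α⁻¹ * ε ^ β * r ^ k := by
        rw [hstep, mul_comm (u k), mul_div_assoc, div_self (ne_of_gt (hupos k)), mul_one,
          Real.log_exp]
      have hkey := key (u k) (u (k+1)) (hupos k) hulek (hule (k+1) hk1) hfk
      rw [hklog] at hkey
      have hmon2 : (ε * 2 ^ k / C) ^ α⁻¹ ≤ (f (u k) / C) ^ α⁻¹ := by
        apply Real.rpow_le_rpow (by positivity) ?_ hαinv0.le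
        exact (div_le_div_iff_of_pos_right hC).2 ihk
      have hcalc : (ε * 2 ^ k / C) ^ α⁻¹ * (C ^ α⁻¹ * ε ^ β * r ^ k) = ε * 2 ^ k := by
        rw [Real.div_rpow hbk.le hC.le, mul_assoc (C ^ α⁻¹), hr_pow k]
        have hCne : C ^ α⁻¹ ≠ 0 := ne_of_gt hc'0
        calc (ε * 2 ^ k) ^ α⁻¹ / C ^ α⁻¹ * (C ^ α⁻¹ * (ε * 2 ^ k) ^ β)
            = (ε * 2 ^ k) ^ α⁻¹ * (ε * 2 ^ k) ^ β * (C ^ α⁻¹ / C ^ α⁻¹) := by ring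
          _ = (ε * 2 ^ k) ^ α⁻¹ * (ε * 2 ^ k) ^ β := by rw [div_self hCne, mul_one]
          _ = (ε * 2 ^ k) ^ (α⁻¹ + β) := (Real.rpow_add hbk _ _).symm
          _ = (ε * 2 ^ k) ^ (1:ℝ) := by
              congr 1
              rw [hβdef]; ring
          _ = ε * 2 ^ k := Real.rpow_one _
      have hmul : (ε * 2 ^ k / C) ^ α⁻¹ * (C ^ α⁻¹ * ε ^ β * r ^ k)
          ≤ (f (u k) / C) ^ α⁻¹ * (C ^ α⁻¹ * ε ^ β * r ^ k) :=
        mul_le_mul_of_nonneg_right hmon2 hq0.le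
      rw [hcalc] at hmul
      rw [pow_succ]
      linarith [hkey, ihk, hmul]
  have hfin := ind K le_rfl
  have hlast : f (u K) ≤ f 1 :=
    hmono ⟨(hupos K).le, hule K le_rfl⟩ ⟨zero_le_one, le_rfl⟩ (hule K le_rfl)
  linarith
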